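/- Let (Ω, μ) be a probability measure space and f : Ω → ℝ a measurable function with f(ω) > 0 for μ-almost every ω. Then for every x ∈ (0,π): (i) for μ-a.e. ω the series ∑_{n∈ℤ} e^{i n x} e^{-n² f(ω)} converges absolutely; (ii) the symmetric partial sums ∑_{|n| ≤ N} e^{i n x} ∫_Ω e^{-n² f(ω)} dμ(ω) converge as N → ∞; and (iii) the integral and the sum can be exchanged: ∫_Ω ( ∑_{n∈ℤ} e^{i n x} e^{-n² f(ω)} ) dμ(ω) = lim_{N→∞} ∑_{|n| ≤ N} e^{i n x} ∫_Ω e^{-n² f(ω)} dμ(ω). -/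

import Mathlib

open Filter Set MeasureTheory

private lemma aux_sum_Icc (g : ℤ → ℂ) (N : ℕ) :
    ∑ n ∈ Finset.Icc (-(N : ℤ)) (N : ℤ), g n
      = g 0 + ∑ k ∈ Finset.range N, (g ((k : ℤ) + 1) + g (-((k : ℤ) + 1))) := by
  induction N with
  | zero => simp
  | succ N ih =>
    have hins : Finset.Icc (-((N + 1 : ℕ) : ℤ)) ((N + 1 : ℕ) : ℤ)
        = insert (-((N + 1 : ℕ) : ℤ))
            (insert ((N + 1 : ℕ) : ℤ) (Finset.Icc (-(N : ℤ)) (N : ℤ))) := by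
      ext m
      simp only [Finset.mem_Icc, Finset.mem_insert]
      push_cast
      omega
    rw [hins, Finset.sum_insert (by simp only [Finset.mem_insert, Finset.mem_Icc]; push_cast; omega),
      Finset.sum_insert (by simp only [Finset.mem_Icc]; push_cast; omega), ih,
      Finset.sum_range_succ]
    push_cast
    ring

private lemma aux_abel {b : ℕ → ℂ} {a : ℕ → ℝ} {M : ℝ} (hM : 0 ≤ M)
    (hb : ∀ n, ‖∑ i ∈ Finset.range n, b i‖ ≤ M)
    (ha : ∀ i, a (i + 1) ≤ a i) (ha0 : ∀ i, 0 ≤ a i) (ha1 : a 0 ≤ 1) (N : ℕ) :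
    ‖∑ i ∈ Finset.range N, a i • b i‖ ≤ M := by
  rcases N with _ | N
  · simpa using hM
  rw [Finset.sum_range_by_parts]
  simp only [Nat.add_sub_cancel]
  have h1 : ‖a N • ∑ i ∈ Finset.range (N + 1), b i‖ ≤ a N * M := by
    rw [norm_smul, Real.norm_eq_abs, abs_of_nonneg (ha0 N)]
    exact mul_le_mul_of_nonneg_left (hb _) (ha0 N)
  have h2 : ‖∑ i ∈ Finset.range N, (a (i + 1) - a i) • ∑ j ∈ Finset.range (i + 1), b j‖
      ≤ ∑ i ∈ Finset.range N, (a i - a (i + 1)) * M := by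
    refine (norm_sum_le _ _).trans (Finset.sum_le_sum fun i _ => ?_)
    rw [norm_smul, Real.norm_eq_abs, abs_of_nonpos (by linarith [ha i]), neg_sub]
    exact mul_le_mul_of_nonneg_left (hb _) (by linarith [ha i])
  have h3 : ∑ i ∈ Finset.range N, (a i - a (i + 1)) * M = (a 0 - a N) * M := by
    rw [← Finset.sum_mul, Finset.sum_range_sub' a N]
  calc ‖a N • ∑ i ∈ Finset.range (N + 1), b i
        - ∑ i ∈ Finset.range N, (a (i + 1) - a i) • ∑ j ∈ Finset.range (i + 1), b j‖
      ≤ a N * M + ((a 0 - a N) * M) := by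
        refine (norm_sub_le _ _).trans ?_
        exact add_le_add h1 (h2.trans (le_of_eq h3))
    _ = a 0 * M := by ring
    _ ≤ 1 * M := mul_le_mul_of_nonneg_right ha1 hM
    _ = M := one_mul M

private lemma aux_geom_nat (w : ℂ) (hw : ‖w‖ = 1) (h1 : w ≠ 1) (n : ℕ) :
    ‖∑ k ∈ Finset.range n, w ^ (k + 1)‖ ≤ 2 / ‖w - 1‖ := by
  have hne : w - 1 ≠ 0 := sub_ne_zero.mpr h1
  have hpos : 0 < ‖w - 1‖ := norm_pos_iff.mpr hne
  have : ∑ k ∈ Finset.range n, w ^ (k + 1) = w * ((w ^ n - 1) / (w - 1)) := by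
    rw [← geom_sum_eq h1]
    rw [Finset.mul_sum]
    exact Finset.sum_congr rfl fun k _ => by ring
  rw [this, norm_mul, hw, one_mul, norm_div]
  rw [div_le_div_iff₀ hpos hpos]
  have : ‖w ^ n - 1‖ ≤ 2 := by
    calc ‖w ^ n - 1‖ ≤ ‖w ^ n‖ + ‖(1 : ℂ)‖ := norm_sub_le _ _
      _ = 2 := by rw [norm_pow, hw]; norm_num
  nlinarith

private lemma aux_geom (z : ℂ) (hz : ‖z‖ = 1) (h1 : z ≠ 1) (n : ℕ) :
    ‖∑ k ∈ Finset.range n, (z ^ ((k : ℤ) + 1) + z ^ (-((k : ℤ) + 1)))‖ ≤ 4 / ‖z - 1‖ := by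
  have hz0 : z ≠ 0 := by intro h; rw [h] at hz; simp at hz
  have hinv : ‖z⁻¹‖ = 1 := by rw [norm_inv, hz]; norm_num
  have hinv1 : z⁻¹ ≠ 1 := fun h => h1 (by rw [← inv_inv z, h, inv_one])
  have hinvsub : ‖z⁻¹ - 1‖ = ‖z - 1‖ := by
    have : z⁻¹ - 1 = z⁻¹ * (1 - z) := by field_simp
    rw [this, norm_mul, hinv, one_mul, norm_sub_rev]
  have hre : ∀ k : ℕ, z ^ ((k : ℤ) + 1) = z ^ (k + 1) := by
    intro k
    rw [show ((k : ℤ) + 1) = ((k + 1 : ℕ) : ℤ) by push_cast; ring, zpow_natCast]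
  have hre2 : ∀ k : ℕ, z ^ (-((k : ℤ) + 1)) = z⁻¹ ^ (k + 1) := by
    intro k
    rw [show (-((k : ℤ) + 1)) = -((k + 1 : ℕ) : ℤ) by push_cast; ring, zpow_neg,
      zpow_natCast, ← inv_pow]
  calc ‖∑ k ∈ Finset.range n, (z ^ ((k : ℤ) + 1) + z ^ (-((k : ℤ) + 1)))‖
      = ‖(∑ k ∈ Finset.range n, z ^ (k + 1)) + ∑ k ∈ Finset.range n, z⁻¹ ^ (k + 1)‖ := by
        rw [← Finset.sum_add_distrib]
        congr 1
        exact Finset.sum_congr rfl fun k _ => by rw [hre k, hre2 k]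
    _ ≤ ‖∑ k ∈ Finset.range n, z ^ (k + 1)‖ + ‖∑ k ∈ Finset.range n, z⁻¹ ^ (k + 1)‖ :=
        norm_add_le _ _
    _ ≤ 4 / ‖z - 1‖ := by
        have h2 := aux_geom_nat z⁻¹ hinv hinv1 n
        rw [hinvsub] at h2
        have h3 := aux_geom_nat z hz h1 n
        have : (4 : ℝ) / ‖z - 1‖ = 2 / ‖z - 1‖ + 2 / ‖z - 1‖ := by ring
        rw [this]
        exact add_le_add h3 h2

private lemma aux_summable {t : ℝ} (ht : 0 < t) :
    Summable fun n : ℤ => Real.exp (-(n : ℝ) ^ 2 * t) := by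
  have hnat : Summable fun n : ℕ => Real.exp (-(n : ℝ) ^ 2 * t) := by
    refine Summable.of_nonneg_of_le (fun n => (Real.exp_pos _).le) (fun n => ?_)
      (summable_geometric_of_lt_one (Real.exp_pos (-t)).le
        (Real.exp_lt_one_iff.mpr (by linarith)))
    rw [← Real.exp_nat_mul]
    apply Real.exp_le_exp.mpr
    rcases n with _ | m
    · simp
    · have h1 : (1 : ℝ) ≤ ((m + 1 : ℕ) : ℝ) := by push_cast; linarith [Nat.cast_nonneg (α := ℝ) m]
      have h0 : (0 : ℝ) ≤ ((m + 1 : ℕ) : ℝ) := by positivity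
      nlinarith [mul_nonneg (mul_nonneg h0 (sub_nonneg.mpr h1)) ht.le]
  apply Summable.of_nat_of_neg
  · exact hnat
  · refine hnat.congr fun n => ?_
    push_cast
    ring_nf

theorem integral_tsum_exchange {Ω : Type*} [MeasurableSpace Ω]
    (μ : Measure Ω) [IsProbabilityMeasure μ]
    (f : Ω → ℝ) (hf : Measurable f) (hfpos : ∀ᵐ ω ∂μ, 0 < f ω)
    (x : ℝ) (hx : x ∈ Set.Ioo (0 : ℝ) Real.pi) :
    (∀ᵐ ω ∂μ, Summable fun n : ℤ =>
      ‖Complex.exp (Complex.I * (n : ℂ) * (x : ℂ)) *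
        Complex.exp (-(n : ℂ) ^ 2 * ((f ω : ℝ) : ℂ))‖) ∧
    Tendsto (fun N : ℕ =>
        ∑ n ∈ Finset.Icc (-(N : ℤ)) (N : ℤ),
          Complex.exp (Complex.I * (n : ℂ) * (x : ℂ)) *
            ((∫ ω, Real.exp (-(n : ℝ) ^ 2 * f ω) ∂μ : ℝ) : ℂ))
      atTop
      (nhds (∫ ω, (∑' n : ℤ, Complex.exp (Complex.I * (n : ℂ) * (x : ℂ)) *
        Complex.exp (-(n : ℂ) ^ 2 * ((f ω : ℝ) : ℂ))) ∂μ)) := by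
  obtain ⟨hx0, hxπ⟩ := hx
  have hπ := Real.pi_pos
  set z : ℂ := Complex.exp (Complex.I * x) with hzdef
  have hznorm : ‖z‖ = 1 := by
    rw [hzdef, Complex.norm_exp]
    simp [Complex.mul_re]
  have hz1 : z ≠ 1 := by
    intro h
    rw [hzdef, Complex.exp_eq_one_iff] at h
    obtain ⟨n, hn⟩ := h
    have him := congrArg Complex.im hn
    simp [Complex.mul_im, Complex.mul_re] at him
    -- him : x = n * (2 * π) (up to form)
    rcases le_or_gt (n : ℝ) 0 with h' | h'
    · nlinarith
    · have : (1 : ℝ) ≤ (n : ℝ) := by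
        have : 0 < n := by exact_mod_cast h'
        exact_mod_cast this
      nlinarith
  have hzsub : 0 < ‖z - 1‖ := norm_pos_iff.mpr (sub_ne_zero.mpr hz1)
  set M : ℝ := 4 / ‖z - 1‖ with hMdef
  have hM0 : 0 ≤ M := by positivity
  have hpow : ∀ n : ℤ, Complex.exp (Complex.I * (n : ℂ) * (x : ℂ)) = z ^ n := by
    intro n
    rw [hzdef, ← Complex.exp_int_mul]
    congr 1; push_cast; ring
  have hexp : ∀ (n : ℤ) (t : ℝ), Complex.exp (-(n : ℂ) ^ 2 * (t : ℂ))
      = ((Real.exp (-(n : ℝ) ^ 2 * t) : ℝ) : ℂ) := by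
    intro n t
    rw [Complex.ofReal_exp]
    congr 1; push_cast; ring
  have hnorm : ∀ (n : ℤ) (t : ℝ),
      ‖Complex.exp (Complex.I * (n : ℂ) * (x : ℂ)) * Complex.exp (-(n : ℂ) ^ 2 * (t : ℂ))‖
        = Real.exp (-(n : ℝ) ^ 2 * t) := by
    intro n t
    rw [hexp n t, norm_mul, hpow n, norm_zpow, hznorm, one_zpow, one_mul,
      Complex.norm_real, Real.norm_eq_abs, abs_of_pos (Real.exp_pos _)]
  have part1 : ∀ᵐ ω ∂μ, Summable fun n : ℤ =>
      ‖Complex.exp (Complex.I * (n : ℂ) * (x : ℂ)) *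
        Complex.exp (-(n : ℂ) ^ 2 * ((f ω : ℝ) : ℂ))‖ := by
    filter_upwards [hfpos] with ω hω
    exact (aux_summable hω).congr fun n => (hnorm n (f ω)).symm
  refine ⟨part1, ?_⟩
  set F : ℕ → Ω → ℂ := fun N ω => ∑ n ∈ Finset.Icc (-(N : ℤ)) (N : ℤ),
      Complex.exp (Complex.I * (n : ℂ) * (x : ℂ)) *
        Complex.exp (-(n : ℂ) ^ 2 * ((f ω : ℝ) : ℂ)) with hFdef
  -- uniform bound
  have hbound : ∀ t : ℝ, 0 ≤ t → ∀ N : ℕ,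
      ‖∑ n ∈ Finset.Icc (-(N : ℤ)) (N : ℤ),
        Complex.exp (Complex.I * (n : ℂ) * (x : ℂ)) *
          Complex.exp (-(n : ℂ) ^ 2 * (t : ℂ))‖ ≤ 1 + M := by
    intro t ht N
    have hgform : ∀ n : ℤ,
        Complex.exp (Complex.I * (n : ℂ) * (x : ℂ)) * Complex.exp (-(n : ℂ) ^ 2 * (t : ℂ))
          = z ^ n * ((Real.exp (-(n : ℝ) ^ 2 * t) : ℝ) : ℂ) := fun n => by
      rw [hpow, hexp]
    rw [Finset.sum_congr rfl (fun n _ => hgform n),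
      aux_sum_Icc (fun n => z ^ n * ((Real.exp (-(n : ℝ) ^ 2 * t) : ℝ) : ℂ)) N]
    refine (norm_add_le _ _).trans ?_
    have h0 : ‖z ^ (0 : ℤ) * ((Real.exp (-((0 : ℤ) : ℝ) ^ 2 * t) : ℝ) : ℂ)‖ = 1 := by
      norm_num
    rw [h0]
    refine add_le_add le_rfl ?_
    have hterm : ∀ k : ℕ,
        z ^ ((k : ℤ) + 1) * ((Real.exp (-(((k : ℤ) + 1 : ℤ) : ℝ) ^ 2 * t) : ℝ) : ℂ)
          + z ^ (-((k : ℤ) + 1)) * ((Real.exp (-((-((k : ℤ) + 1) : ℤ) : ℝ) ^ 2 * t) : ℝ) : ℂ)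
        = (Real.exp (-((k : ℝ) + 1) ^ 2 * t)) • (z ^ ((k : ℤ) + 1) + z ^ (-((k : ℤ) + 1))) := by
      intro k
      have e1 : ((((k : ℤ) + 1 : ℤ)) : ℝ) = (k : ℝ) + 1 := by push_cast; ring
      have e2 : (((-((k : ℤ) + 1) : ℤ)) : ℝ) = -((k : ℝ) + 1) := by push_cast; ring
      rw [e1, e2, neg_sq, Complex.real_smul]
      ring
    rw [Finset.sum_congr rfl (fun k _ => hterm k)]
    refine aux_abel (a := fun k : ℕ => Real.exp (-((k : ℝ) + 1) ^ 2 * t))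
      (b := fun k : ℕ => z ^ ((k : ℤ) + 1) + z ^ (-((k : ℤ) + 1))) hM0
      (fun n => by rw [hMdef]; exact aux_geom z hznorm hz1 n) (fun i => ?_)
      (fun i => (Real.exp_pos _).le)
      (by rw [Real.exp_le_one_iff]; nlinarith) N
    apply Real.exp_le_exp.mpr
    have : (0 : ℝ) ≤ (i : ℝ) := Nat.cast_nonneg i
    push_cast
    nlinarith
  -- pointwise a.e. convergence of symmetric partial sums
  have hptwise : ∀ᵐ ω ∂μ, Tendsto (fun N => F N ω) atTop
      (nhds (∑' n : ℤ, Complex.exp (Complex.I * (n : ℂ) * (x : ℂ)) *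
        Complex.exp (-(n : ℂ) ^ 2 * ((f ω : ℝ) : ℂ)))) := by
    filter_upwards [hfpos] with ω hω
    have hsum : Summable (fun n : ℤ => Complex.exp (Complex.I * (n : ℂ) * (x : ℂ)) *
        Complex.exp (-(n : ℂ) ^ 2 * ((f ω : ℝ) : ℂ))) := by
      apply Summable.of_norm
      exact (aux_summable hω).congr fun n => (hnorm n (f ω)).symm
    have hIcc : Tendsto (fun N : ℕ => Finset.Icc (-(N : ℤ)) (N : ℤ)) atTop atTop := by
      apply tendsto_atTop_finset_of_monotone
      · intro a b hab
        apply Finset.Icc_subset_Icc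
        · exact neg_le_neg (by exact_mod_cast hab)
        · exact_mod_cast hab
      · intro m
        exact ⟨m.natAbs, by simp only [Finset.mem_Icc]; omega⟩
    exact hsum.hasSum.comp hIcc
  have hmeas1 : ∀ n : ℤ, Measurable fun ω =>
      Complex.exp (Complex.I * (n : ℂ) * (x : ℂ)) *
        Complex.exp (-(n : ℂ) ^ 2 * ((f ω : ℝ) : ℂ)) := by
    intro n
    exact (Complex.continuous_exp.measurable.comp
      (measurable_const.mul (Complex.measurable_ofReal.comp hf))).const_mul _
  have hmeas : ∀ N, AEStronglyMeasurable (F N) μ := by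
    intro N
    exact (Finset.measurable_sum _ fun n _ => hmeas1 n).aestronglyMeasurable
  have hbd : ∀ N, ∀ᵐ ω ∂μ, ‖F N ω‖ ≤ 1 + M := by
    intro N
    filter_upwards [hfpos] with ω hω
    exact hbound (f ω) hω.le N
  have hDCT := tendsto_integral_of_dominated_convergence (F := F) (fun _ => 1 + M)
    hmeas (integrable_const _) hbd hptwise
  have hint : ∀ n : ℤ, Integrable (fun ω =>
      Complex.exp (Complex.I * (n : ℂ) * (x : ℂ)) *
        Complex.exp (-(n : ℂ) ^ 2 * ((f ω : ℝ) : ℂ))) μ := by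
    intro n
    refine Integrable.mono' (integrable_const (1 : ℝ)) (hmeas1 n).aestronglyMeasurable ?_
    filter_upwards [hfpos] with ω hω
    rw [hnorm n (f ω)]
    rw [Real.exp_le_one_iff]
    nlinarith [sq_nonneg ((n : ℝ))]
  have hswap : ∀ N, ∫ ω, F N ω ∂μ
      = ∑ n ∈ Finset.Icc (-(N : ℤ)) (N : ℤ),
          Complex.exp (Complex.I * (n : ℂ) * (x : ℂ)) *
            ((∫ ω, Real.exp (-(n : ℝ) ^ 2 * f ω) ∂μ : ℝ) : ℂ) := by
    intro N
    rw [hFdef]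
    rw [integral_finset_sum _ (fun n _ => hint n)]
    refine Finset.sum_congr rfl fun n _ => ?_
    have : (fun ω => Complex.exp (Complex.I * (n : ℂ) * (x : ℂ)) *
        Complex.exp (-(n : ℂ) ^ 2 * ((f ω : ℝ) : ℂ)))
        = fun ω => Complex.exp (Complex.I * (n : ℂ) * (x : ℂ)) *
            ((Real.exp (-(n : ℝ) ^ 2 * f ω) : ℝ) : ℂ) :=
      funext fun ω => by rw [hexp]
    rw [this, integral_const_mul]
    congr 1
    exact integral_ofReal
  have heq : (fun N : ℕ =>
      ∑ n ∈ Finset.Icc (-(N : ℤ)) (N : ℤ),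
        Complex.exp (Complex.I * (n : ℂ) * (x : ℂ)) *
          ((∫ ω, Real.exp (-(n : ℝ) ^ 2 * f ω) ∂μ : ℝ) : ℂ))
      = fun N => ∫ ω, F N ω ∂μ := funext fun N => (hswap N).symm
  rw [heq]
  exact hDCT
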